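/- Let L ∈ L^{k*}(P) be a random variable, k* ∈ (1,∞]. Then the quantile function of L satisfies F_L^{-1}(1−t) = ∫_{(t,1]} α^{-1} dλ_L(α) for all t ∈ (0,1), where λ_L is a probability distribution on (0,1], if and only if: L ≥ 0 P-a.s., E_P[L] = 1, λ_L(α) = E_P[(L − F_L^{-1}(1−α))_+] for α ∈ (0,1), and λ_L(1) = 1 (where λ_L(α) denotes the CDF value of λ_L at α). -/

import Mathlib

open MeasureTheory
open scoped ENNReal

section Helpers
open Set ProbabilityTheory Filter
open scoped Topology

set_option linter.unusedSectionVars false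
set_option linter.unusedVariables false

noncomputable def Qf (μ : Measure ℝ) (p : ℝ) : ℝ := sInf {s | ENNReal.ofReal p ≤ μ (Set.Iic s)}
noncomputable def Qm (μ : Measure ℝ) (p : ℝ) : ℝ :=
  if p ∈ Set.Ioo (0:ℝ) 1 then Qf μ p else Qf μ (1/2)

variable (μ : Measure ℝ) [IsProbabilityMeasure μ]

lemma mem_S_iff (p s : ℝ) : ENNReal.ofReal p ≤ μ (Set.Iic s) ↔ p ≤ cdf μ s := by
  rw [← ofReal_cdf μ s, ENNReal.ofReal_le_ofReal_iff (cdf_nonneg μ s)]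

lemma S_eq (p : ℝ) : {s | ENNReal.ofReal p ≤ μ (Set.Iic s)} = {s | p ≤ cdf μ s} := by
  ext s; exact mem_S_iff μ p s

lemma S_nonempty {p : ℝ} (hp : p < 1) : {s | p ≤ cdf μ s}.Nonempty := by
  have h := tendsto_cdf_atTop μ
  have : ∀ᶠ s in atTop, p ≤ cdf μ s := h.eventually_const_le hp
  exact this.exists

lemma S_bddBelow {p : ℝ} (hp : 0 < p) : BddBelow {s | p ≤ cdf μ s} := by
  have h := tendsto_cdf_atBot μ
  have : ∀ᶠ s in atBot, cdf μ s < p := h.eventually_lt_const hp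
  obtain ⟨s₀, hs₀⟩ := this.exists
  refine ⟨s₀, fun s hs => ?_⟩
  by_contra hlt
  exact absurd (le_trans hs (monotone_cdf μ (le_of_lt (not_le.1 hlt)))) (not_le.2 hs₀)

lemma Qf_eq (p : ℝ) : Qf μ p = sInf {s | p ≤ cdf μ s} := by rw [Qf, S_eq]

lemma cdf_Qf_ge {p : ℝ} (hp : p ∈ Set.Ioo (0:ℝ) 1) : p ≤ cdf μ (Qf μ p) := by
  rw [Qf_eq]
  set S := {s | p ≤ cdf μ s} with hS
  have hne : S.Nonempty := S_nonempty μ hp.2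
  have hbdd : BddBelow S := S_bddBelow μ hp.1
  have key : ∀ᶠ y in 𝓝[>] (sInf S), p ≤ cdf μ y := by
    refine eventually_of_mem self_mem_nhdsWithin (fun y hy => ?_)
    obtain ⟨s, hsS, hs⟩ := (csInf_lt_iff hbdd hne).1 hy
    exact le_trans hsS (monotone_cdf μ hs.le)
  have hc : Tendsto (cdf μ) (𝓝[>] (sInf S)) (𝓝 (cdf μ (sInf S))) := by
    have := (cdf μ).right_continuous (sInf S)
    exact this.tendsto.mono_left (nhdsWithin_mono _ (Set.Ioi_subset_Ici le_rfl))
  exact ge_of_tendsto hc key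

lemma Qf_le_iff {p : ℝ} (hp : p ∈ Set.Ioo (0:ℝ) 1) {s : ℝ} :
    Qf μ p ≤ s ↔ p ≤ cdf μ s := by
  constructor
  · intro h; exact le_trans (cdf_Qf_ge μ hp) (monotone_cdf μ h)
  · intro h; rw [Qf_eq]; exact csInf_le (S_bddBelow μ hp.1) h

lemma Qf_mono {p p' : ℝ} (hp : p ∈ Set.Ioo (0:ℝ) 1) (hp' : p' ∈ Set.Ioo (0:ℝ) 1)
    (h : p ≤ p') : Qf μ p ≤ Qf μ p' := by
  rw [Qf_eq, Qf_eq]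
  exact csInf_le_csInf (S_bddBelow μ hp.1) (S_nonempty μ hp'.2)
    (fun s hs => le_trans h hs)

lemma Qf_nonneg (h0 : μ (Set.Iio 0) = 0) {p : ℝ} (hp : p ∈ Set.Ioo (0:ℝ) 1) :
    0 ≤ Qf μ p := by
  rw [Qf_eq]
  refine le_csInf (S_nonempty μ hp.2) (fun s hs => ?_)
  by_contra hlt
  push_neg at hlt
  have : cdf μ s ≤ 0 := by
    rw [cdf_eq_real, measureReal_def]
    have : μ (Set.Iic s) ≤ μ (Set.Iio 0) := measure_mono (fun x hx => lt_of_le_of_lt hx hlt)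
    rw [h0] at this
    simp [le_antisymm this zero_le]
  exact absurd (le_trans hs this) (not_le.2 hp.1)

lemma Qm_preimage_Iic (s : ℝ) :
    Qm μ ⁻¹' Set.Iic s =
      (Set.Ioo (0:ℝ) 1 ∩ Set.Iic (cdf μ s)) ∪ ((Set.Ioo (0:ℝ) 1)ᶜ ∩ {_p : ℝ | Qf μ (1/2) ≤ s}) := by
  ext p
  by_cases hp : p ∈ Set.Ioo (0:ℝ) 1
  · simp only [Set.mem_preimage, Set.mem_Iic, Qm, if_pos hp, Set.mem_union, Set.mem_inter_iff,
      Set.mem_compl_iff, hp, not_true, false_and, or_false, true_and, Set.mem_setOf_eq]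
    exact Qf_le_iff μ hp
  · simp only [Set.mem_preimage, Set.mem_Iic, Qm, if_neg hp, Set.mem_union, Set.mem_inter_iff,
      Set.mem_compl_iff, hp, false_and, false_or, not_false_iff, true_and, Set.mem_setOf_eq,
      if_false]

lemma measurable_Qm : Measurable (Qm μ) := by
  refine measurable_of_Iic (fun s => ?_)
  rw [Qm_preimage_Iic]
  exact (measurableSet_Ioo.inter measurableSet_Iic).union
    (measurableSet_Ioo.compl.inter (MeasurableSet.const _))

lemma map_Qm : (volume.restrict (Set.Ioo (0:ℝ) 1)).map (Qm μ) = μ := by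
  have hfin : IsFiniteMeasure ((volume.restrict (Set.Ioo (0:ℝ) 1)).map (Qm μ)) := by
    constructor
    rw [Measure.map_apply (measurable_Qm μ) MeasurableSet.univ]
    simp [Real.volume_Ioo]
  refine Measure.ext_of_Iic _ _ (fun s => ?_)
  rw [Measure.map_apply (measurable_Qm μ) measurableSet_Iic, Measure.restrict_apply
    ((measurable_Qm μ) measurableSet_Iic), Qm_preimage_Iic, Set.union_inter_distrib_right]
  have h2 : ((Set.Ioo (0:ℝ) 1)ᶜ ∩ {_p : ℝ | Qf μ (1/2) ≤ s}) ∩ Set.Ioo (0:ℝ) 1 = ∅ := by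
    ext x; simp only [Set.mem_inter_iff, Set.mem_compl_iff, Set.mem_empty_iff_false, iff_false]
    tauto
  rw [h2, Set.union_empty]
  have h1 : (Set.Ioo (0:ℝ) 1 ∩ Set.Iic (cdf μ s)) ∩ Set.Ioo (0:ℝ) 1
      = Set.Ioo (0:ℝ) 1 ∩ Set.Iic (cdf μ s) := by
    ext x; simp only [Set.mem_inter_iff]; tauto
  rw [h1, ← ofReal_cdf μ s]
  rcases lt_or_ge (cdf μ s) 1 with hlt | hge
  · have : Set.Ioo (0:ℝ) 1 ∩ Set.Iic (cdf μ s) = Set.Ioc 0 (cdf μ s) := by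
      ext x
      simp only [Set.mem_inter_iff, Set.mem_Ioo, Set.mem_Iic, Set.mem_Ioc]
      constructor
      · rintro ⟨⟨h1, h2⟩, h3⟩; exact ⟨h1, h3⟩
      · rintro ⟨h1, h3⟩; exact ⟨⟨h1, lt_of_le_of_lt h3 hlt⟩, h3⟩
    rw [this, Real.volume_Ioc, sub_zero]
  · have hcd : cdf μ s = 1 := le_antisymm (cdf_le_one μ s) hge
    rw [hcd]
    have : Set.Ioo (0:ℝ) 1 ∩ Set.Iic (1:ℝ) = Set.Ioo (0:ℝ) 1 := by
      refine Set.inter_eq_left.2 (fun x hx => le_of_lt hx.2)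
    rw [this, Real.volume_Ioo]
    norm_num

lemma swap_lint (ν κ : Measure ℝ) [SFinite ν] [SFinite κ] (F : ℝ × ℝ → ℝ≥0∞)
    (hF : Measurable F) :
    ∫⁻ x, (∫⁻ y, F (x, y) ∂κ) ∂ν = ∫⁻ y, (∫⁻ x, F (x, y) ∂ν) ∂κ := by
  have : Function.uncurry (fun x y => F (x, y)) = F := by
    funext z; simp [Function.uncurry]
  exact lintegral_lintegral_swap (by rw [this]; exact hF.aemeasurable)

lemma refl_lint (a b : ℝ) (g : ℝ → ℝ≥0∞) (hg : Measurable g) :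
    ∫⁻ s in Set.Ioo a b, g (1 - s) = ∫⁻ p in Set.Ioo (1 - b) (1 - a), g p := by
  have hmp : MeasurePreserving (fun t : ℝ => 1 - t) volume volume :=
    Measure.measurePreserving_sub_left volume 1
  have h1 : ∫⁻ p in Set.Ioo (1 - b) (1 - a), g p
      = ∫⁻ p, (Set.Ioo (1 - b) (1 - a)).indicator g p := by
    rw [lintegral_indicator measurableSet_Ioo]
  have h2 : ∫⁻ s in Set.Ioo a b, g (1 - s)
      = ∫⁻ s, ((Set.Ioo (1 - b) (1 - a)).indicator g) (1 - s) := by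
    rw [← lintegral_indicator measurableSet_Ioo]
    congr 1
    funext s
    by_cases hs : s ∈ Set.Ioo a b
    · rw [Set.indicator_of_mem hs]
      rw [Set.indicator_of_mem (by constructor <;> · simp only [Set.mem_Ioo] at hs; linarith)]
    · rw [Set.indicator_of_notMem hs, Set.indicator_of_notMem]
      intro hmem
      simp only [Set.mem_Ioo] at hmem hs
      exact hs ⟨by linarith [hmem.2], by linarith [hmem.1]⟩
  rw [h1, h2, hmp.lintegral_comp (hg.indicator measurableSet_Ioo)]

lemma lint_invsq {a b : ℝ} (ha : 0 < a) (hab : a ≤ b) :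
    ∫⁻ s in Set.Ioo a b, ENNReal.ofReal ((s ^ 2)⁻¹) = ENNReal.ofReal (a⁻¹ - b⁻¹) := by
  have hcont : ContinuousOn (fun s : ℝ => (s ^ 2)⁻¹) (Set.Icc a b) := by
    refine ContinuousOn.inv₀ (continuous_pow 2).continuousOn (fun x hx => ?_)
    exact pow_ne_zero _ (ne_of_gt (lt_of_lt_of_le ha hx.1))
  have hintIcc : IntegrableOn (fun s : ℝ => (s ^ 2)⁻¹) (Set.Icc a b) volume :=
    hcont.integrableOn_Icc
  have hint : IntegrableOn (fun s : ℝ => (s ^ 2)⁻¹) (Set.Ioo a b) volume :=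
    hintIcc.mono_set Set.Ioo_subset_Icc_self
  have hderiv : ∀ x ∈ Set.uIcc a b, HasDerivAt (fun y : ℝ => -y⁻¹) ((x ^ 2)⁻¹) x := by
    intro x hx
    rw [Set.uIcc_of_le hab] at hx
    have hx0 : x ≠ 0 := ne_of_gt (lt_of_lt_of_le ha hx.1)
    have h := (hasDerivAt_inv hx0).neg
    rw [neg_neg] at h
    exact h
  have hii : ∫ s in a..b, (s ^ 2)⁻¹ = a⁻¹ - b⁻¹ := by
    rw [intervalIntegral.integral_eq_sub_of_hasDerivAt hderiv]
    · ring
    · rw [intervalIntegrable_iff, Set.uIoc_of_le hab]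
      exact hintIcc.mono_set Set.Ioc_subset_Icc_self
  have hnn : 0 ≤ᵐ[volume.restrict (Set.Ioo a b)] (fun s : ℝ => (s ^ 2)⁻¹) := by
    refine (ae_restrict_iff' measurableSet_Ioo).2 (ae_of_all _ (fun s hs => ?_))
    positivity
  rw [← MeasureTheory.ofReal_integral_eq_lintegral_ofReal hint hnn,
    ← MeasureTheory.integral_Ioc_eq_integral_Ioo, ← intervalIntegral.integral_of_le hab, hii]

lemma FWD_swap (lam : Measure ℝ) [IsFiniteMeasure lam] {α : ℝ} (hα : 0 < α) :
    ∫⁻ t in Set.Ioo 0 α, (∫⁻ a in Set.Ioc t α, ENNReal.ofReal a⁻¹ ∂lam) = lam (Set.Ioc 0 α) := by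
  set F : ℝ × ℝ → ℝ≥0∞ :=
    ({z : ℝ × ℝ | z.1 < z.2 ∧ z.2 ≤ α}).indicator (fun z => ENNReal.ofReal z.2⁻¹) with hF
  have hFset : MeasurableSet {z : ℝ × ℝ | z.1 < z.2 ∧ z.2 ≤ α} :=
    (measurableSet_lt measurable_fst measurable_snd).inter (measurable_snd measurableSet_Iic)
  have hFmeas : Measurable F :=
    Measurable.indicator (measurable_snd.inv.ennreal_ofReal) hFset
  have step1 : ∀ t : ℝ, ∫⁻ a in Set.Ioc t α, ENNReal.ofReal a⁻¹ ∂lam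
      = ∫⁻ a, F (t, a) ∂lam := by
    intro t
    rw [← lintegral_indicator measurableSet_Ioc]
    refine lintegral_congr (fun a => ?_)
    by_cases ha : a ∈ Set.Ioc t α
    · rw [Set.indicator_of_mem ha, hF, Set.indicator_of_mem (by exact ha)]
    · rw [Set.indicator_of_notMem ha, hF, Set.indicator_of_notMem (by exact ha)]
  have step3 : ∀ a : ℝ, ∫⁻ t in Set.Ioo 0 α, F (t, a)
      = (Set.Ioc 0 α).indicator (fun _ => 1) a := by
    intro a
    by_cases ha : a ∈ Set.Ioc 0 α
    · have heq : ∀ t : ℝ, F (t, a) = (Set.Iio a).indicator (fun _ => ENNReal.ofReal a⁻¹) t := by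
        intro t
        by_cases hta : t < a
        · rw [hF, Set.indicator_of_mem (by exact ⟨hta, ha.2⟩),
            Set.indicator_of_mem (Set.mem_Iio.2 hta)]
        · rw [hF, Set.indicator_of_notMem (by simp only [Set.mem_setOf_eq]; tauto),
            Set.indicator_of_notMem (by simpa using hta)]
      simp only [heq]
      rw [lintegral_indicator measurableSet_Iio, Measure.restrict_restrict measurableSet_Iio,
        setLIntegral_const]
      have : Set.Iio a ∩ Set.Ioo 0 α = Set.Ioo 0 a := by
        ext x
        simp only [Set.mem_inter_iff, Set.mem_Iio, Set.mem_Ioo]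
        constructor
        · rintro ⟨h1, h2, h3⟩; exact ⟨h2, h1⟩
        · rintro ⟨h2, h1⟩; exact ⟨h1, h2, lt_of_lt_of_le h1 ha.2⟩
      rw [this, Real.volume_Ioo, sub_zero, Set.indicator_of_mem ha,
        ← ENNReal.ofReal_mul (inv_nonneg.2 ha.1.le), inv_mul_cancel₀ (ne_of_gt ha.1),
        ENNReal.ofReal_one]
    · have heq : ∀ t ∈ Set.Ioo (0:ℝ) α, F (t, a) = 0 := by
        intro t ht
        rw [hF, Set.indicator_of_notMem]
        simp only [Set.mem_setOf_eq, not_and]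
        intro hta
        simp only [Set.mem_Ioc, not_and] at ha
        intro haα
        exact absurd haα (ha (lt_trans ht.1 hta))
      rw [setLIntegral_congr_fun measurableSet_Ioo heq, lintegral_zero,
        Set.indicator_of_notMem ha]
  calc ∫⁻ t in Set.Ioo 0 α, (∫⁻ a in Set.Ioc t α, ENNReal.ofReal a⁻¹ ∂lam)
      = ∫⁻ t in Set.Ioo 0 α, (∫⁻ a, F (t, a) ∂lam) := by
        exact setLIntegral_congr_fun measurableSet_Ioo (fun t _ => step1 t)
    _ = ∫⁻ a, (∫⁻ t in Set.Ioo 0 α, F (t, a)) ∂lam := swap_lint _ lam F hFmeas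
    _ = ∫⁻ a, (Set.Ioc 0 α).indicator (fun _ => 1) a ∂lam := lintegral_congr step3
    _ = lam (Set.Ioc 0 α) := by
        rw [lintegral_indicator measurableSet_Ioc, setLIntegral_one]

lemma BWD_swap {t : ℝ} (ht : 0 < t) (ht1 : t < 1) (h : ℝ → ℝ≥0∞) (hh : Measurable h) :
    ∫⁻ s in Set.Ioo t 1, ENNReal.ofReal ((s ^ 2)⁻¹) * (∫⁻ p in Set.Ioo 0 (1 - s), h p)
      = ∫⁻ p in Set.Ioo 0 (1 - t), h p * ENNReal.ofReal (t⁻¹ - (1 - p)⁻¹) := by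
  set F : ℝ × ℝ → ℝ≥0∞ :=
    ({z : ℝ × ℝ | 0 < z.2 ∧ z.2 < 1 - z.1}).indicator
      (fun z => ENNReal.ofReal ((z.1 ^ 2)⁻¹) * h z.2) with hF
  have hFset : MeasurableSet {z : ℝ × ℝ | 0 < z.2 ∧ z.2 < 1 - z.1} := by
    refine (measurableSet_lt measurable_const measurable_snd).inter
      (measurableSet_lt measurable_snd ?_)
    exact (measurable_const.sub measurable_fst)
  have hFmeas : Measurable F := by
    refine Measurable.indicator ?_ hFset
    exact ((measurable_fst.pow_const 2).inv.ennreal_ofReal).mul (hh.comp measurable_snd)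
  have step1 : ∀ s : ℝ, ENNReal.ofReal ((s ^ 2)⁻¹) * (∫⁻ p in Set.Ioo 0 (1 - s), h p)
      = ∫⁻ p, F (s, p) := by
    intro s
    rw [← lintegral_const_mul _ hh, ← lintegral_indicator measurableSet_Ioo]
    refine lintegral_congr (fun p => ?_)
    by_cases hp : p ∈ Set.Ioo 0 (1 - s)
    · rw [Set.indicator_of_mem hp, hF, Set.indicator_of_mem (by exact hp)]
    · rw [Set.indicator_of_notMem hp, hF, Set.indicator_of_notMem (by exact hp)]
  have step3 : ∀ p : ℝ, ∫⁻ s in Set.Ioo t 1, F (s, p)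
      = (Set.Ioo 0 (1 - t)).indicator (fun p => h p * ENNReal.ofReal (t⁻¹ - (1 - p)⁻¹)) p := by
    intro p
    by_cases hp : p ∈ Set.Ioo 0 (1 - t)
    · have heq : ∀ s : ℝ, F (s, p)
          = (Set.Iio (1 - p)).indicator (fun s => ENNReal.ofReal ((s ^ 2)⁻¹) * h p) s := by
        intro s
        by_cases hsp : s < 1 - p
        · rw [hF, Set.indicator_of_mem (by exact ⟨hp.1, by linarith⟩),
            Set.indicator_of_mem (Set.mem_Iio.2 hsp)]
        · rw [hF, Set.indicator_of_notMem (by simp only [Set.mem_setOf_eq, not_and]; intro _; linarith),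
            Set.indicator_of_notMem (by simpa using hsp)]
      simp only [heq]
      rw [lintegral_indicator measurableSet_Iio, Measure.restrict_restrict measurableSet_Iio]
      have hinter : Set.Iio (1 - p) ∩ Set.Ioo t 1 = Set.Ioo t (1 - p) := by
        ext x
        simp only [Set.mem_inter_iff, Set.mem_Iio, Set.mem_Ioo]
        constructor
        · rintro ⟨h1, h2, h3⟩; exact ⟨h2, h1⟩
        · rintro ⟨h2, h1⟩
          exact ⟨h1, h2, by simp only [Set.mem_Ioo] at hp; linarith [hp.1]⟩
      have hm2 : Measurable (fun a : ℝ => ENNReal.ofReal ((a ^ 2)⁻¹)) := by fun_prop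
      rw [hinter, lintegral_mul_const (h p) hm2,
        lint_invsq ht (by simp only [Set.mem_Ioo] at hp; linarith [hp.2]),
        Set.indicator_of_mem hp, mul_comm]
    · have heq : ∀ s ∈ Set.Ioo t 1, F (s, p) = 0 := by
        intro s hs
        rw [hF, Set.indicator_of_notMem]
        simp only [Set.mem_setOf_eq, not_and]
        intro hp0
        simp only [Set.mem_Ioo, not_and] at hp
        have := hp hp0
        simp only [Set.mem_Ioo] at hs
        linarith [hs.1]
      rw [setLIntegral_congr_fun measurableSet_Ioo heq, lintegral_zero,
        Set.indicator_of_notMem hp]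
  calc ∫⁻ s in Set.Ioo t 1, ENNReal.ofReal ((s ^ 2)⁻¹) * (∫⁻ p in Set.Ioo 0 (1 - s), h p)
      = ∫⁻ s in Set.Ioo t 1, (∫⁻ p, F (s, p)) :=
        setLIntegral_congr_fun measurableSet_Ioo (fun s _ => step1 s)
    _ = ∫⁻ p, (∫⁻ s in Set.Ioo t 1, F (s, p)) := swap_lint _ volume F hFmeas
    _ = ∫⁻ p, (Set.Ioo 0 (1 - t)).indicator (fun p => h p * ENNReal.ofReal (t⁻¹ - (1 - p)⁻¹)) p :=
        lintegral_congr step3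
    _ = ∫⁻ p in Set.Ioo 0 (1 - t), h p * ENNReal.ofReal (t⁻¹ - (1 - p)⁻¹) := by
        rw [lintegral_indicator measurableSet_Ioo]

lemma BWD_swap2 (lam : Measure ℝ) [IsFiniteMeasure lam] {t : ℝ} (ht : 0 < t) :
    ∫⁻ a in Set.Ioc t 1, (∫⁻ s in Set.Ioo a 1, ENNReal.ofReal ((s ^ 2)⁻¹)) ∂lam
      = ∫⁻ s, (Set.Ioo t 1).indicator (fun s => ENNReal.ofReal ((s ^ 2)⁻¹) * lam (Set.Ioo t s)) s := by
  set F : ℝ × ℝ → ℝ≥0∞ :=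
    ({z : ℝ × ℝ | z.1 < z.2 ∧ z.2 < 1}).indicator (fun z => ENNReal.ofReal ((z.2 ^ 2)⁻¹)) with hF
  have hFset : MeasurableSet {z : ℝ × ℝ | z.1 < z.2 ∧ z.2 < 1} :=
    (measurableSet_lt measurable_fst measurable_snd).inter
      (measurableSet_lt measurable_snd measurable_const)
  have hFmeas : Measurable F :=
    Measurable.indicator ((measurable_snd.pow_const 2).inv.ennreal_ofReal) hFset
  have step1 : ∀ a : ℝ, ∫⁻ s in Set.Ioo a 1, ENNReal.ofReal ((s ^ 2)⁻¹)
      = ∫⁻ s, F (a, s) := by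
    intro a
    rw [← lintegral_indicator measurableSet_Ioo]
    refine lintegral_congr (fun s => ?_)
    by_cases hs : s ∈ Set.Ioo a 1
    · rw [Set.indicator_of_mem hs, hF, Set.indicator_of_mem (by exact hs)]
    · rw [Set.indicator_of_notMem hs, hF, Set.indicator_of_notMem (by exact hs)]
  have step3 : ∀ s : ℝ, ∫⁻ a in Set.Ioc t 1, F (a, s) ∂lam
      = (Set.Ioo t 1).indicator (fun s => ENNReal.ofReal ((s ^ 2)⁻¹) * lam (Set.Ioo t s)) s := by
    intro s
    by_cases hs : s ∈ Set.Ioo t 1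
    · have heq : ∀ a : ℝ, F (a, s)
          = (Set.Iio s).indicator (fun _ => ENNReal.ofReal ((s ^ 2)⁻¹)) a := by
        intro a
        by_cases has : a < s
        · rw [hF, Set.indicator_of_mem (by exact ⟨has, hs.2⟩),
            Set.indicator_of_mem (Set.mem_Iio.2 has)]
        · rw [hF, Set.indicator_of_notMem (by simp only [Set.mem_setOf_eq]; tauto),
            Set.indicator_of_notMem (by simpa using has)]
      simp only [heq]
      rw [lintegral_indicator measurableSet_Iio, Measure.restrict_restrict measurableSet_Iio,
        setLIntegral_const, Set.indicator_of_mem hs]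
      have : Set.Iio s ∩ Set.Ioc t 1 = Set.Ioo t s := by
        ext x
        simp only [Set.mem_inter_iff, Set.mem_Iio, Set.mem_Ioc, Set.mem_Ioo]
        constructor
        · rintro ⟨h1, h2, h3⟩; exact ⟨h2, h1⟩
        · rintro ⟨h2, h1⟩; exact ⟨h1, h2, by simp only [Set.mem_Ioo] at hs; linarith [hs.2]⟩
      rw [this]
    · have heq : ∀ a ∈ Set.Ioc t 1, F (a, s) = 0 := by
        intro a ha
        rw [hF, Set.indicator_of_notMem]
        simp only [Set.mem_setOf_eq, not_and]
        intro has
        simp only [Set.mem_Ioo, not_and] at hs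
        simp only [Set.mem_Ioc] at ha
        exact hs (lt_trans ha.1 has)
      rw [setLIntegral_congr_fun measurableSet_Ioc heq, lintegral_zero,
        Set.indicator_of_notMem hs]
  calc ∫⁻ a in Set.Ioc t 1, (∫⁻ s in Set.Ioo a 1, ENNReal.ofReal ((s ^ 2)⁻¹)) ∂lam
      = ∫⁻ a in Set.Ioc t 1, (∫⁻ s, F (a, s)) ∂lam :=
        setLIntegral_congr_fun measurableSet_Ioc (fun a _ => step1 a)
    _ = ∫⁻ s, (∫⁻ a in Set.Ioc t 1, F (a, s) ∂lam) := swap_lint _ volume F hFmeas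
    _ = ∫⁻ s, (Set.Ioo t 1).indicator (fun s => ENNReal.ofReal ((s ^ 2)⁻¹) * lam (Set.Ioo t s)) s :=
        lintegral_congr step3

lemma ofReal_toReal_sub {a b : ℝ≥0∞} (ha : a ≠ ⊤) (hb : b ≠ ⊤) :
    ENNReal.ofReal (a.toReal - b.toReal) = a - b := by
  rcases le_total b a with h | h
  · rw [← ENNReal.toReal_sub_of_le h ha, ENNReal.ofReal_toReal (by
      exact ne_top_of_le_ne_top ha tsub_le_self)]
  · rw [tsub_eq_zero_of_le h, ENNReal.ofReal_eq_zero.2 (by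
      have := ENNReal.toReal_mono hb h
      linarith)]

lemma ofReal_max_zero (x : ℝ) : ENNReal.ofReal (max x 0) = ENNReal.ofReal x := by
  rcases le_total x 0 with h | h
  · rw [max_eq_right h, ENNReal.ofReal_zero, eq_comm, ENNReal.ofReal_eq_zero.2 h]
  · rw [max_eq_left h]

end Helpers

/-- Characterization of quantile functions of dual variables: the quantile function of `L`
equals `t ↦ ∫_{(t,1]} α⁻¹ dλ_L(α)` for a probability distribution `λ_L` on `(0,1]` if and
only if `L ≥ 0` a.s., `E[L] = 1`, `λ_L((0,α]) = E[(L − F_L⁻¹(1−α))_+]` for `α ∈ (0,1)`,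
and `λ_L((0,1]) = 1`. -/
theorem quantile_representation_iff
    {Ω : Type*} [MeasurableSpace Ω] (P : Measure Ω) [IsProbabilityMeasure P]
    (q : ℝ≥0∞) (hq : 1 < q)
    (L : Ω → ℝ) (hL : MemLp L q P)
    (lam : Measure ℝ) (hsupp : lam (Set.Ioc (0 : ℝ) 1)ᶜ = 0) :
    (IsProbabilityMeasure lam ∧
      ∀ t ∈ Set.Ioo (0 : ℝ) 1,
        sInf {s : ℝ | ENNReal.ofReal (1 - t) ≤ P {ω | L ω ≤ s}}
          = ∫ a in Set.Ioc t 1, a⁻¹ ∂lam)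
    ↔ ((∀ᵐ ω ∂P, 0 ≤ L ω) ∧ (∫ ω, L ω ∂P) = 1 ∧
        (∀ α ∈ Set.Ioo (0 : ℝ) 1,
          (lam (Set.Ioc 0 α)).toReal
            = ∫ ω, max (L ω - sInf {s : ℝ | ENNReal.ofReal (1 - α) ≤ P {ω' | L ω' ≤ s}}) 0 ∂P) ∧
        lam (Set.Ioc (0 : ℝ) 1) = 1) := by
  classical
  have hone : (1:ℝ≥0∞) ≤ q := hq.le
  have hLi : Integrable L P := hL.integrable hone
  have hmeas : AEMeasurable L P := hL.aestronglyMeasurable.aemeasurable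
  set μ := P.map L with hμdef
  have hμprob : IsProbabilityMeasure μ := Measure.isProbabilityMeasure_map hmeas
  have hset : ∀ s : ℝ, P {ω | L ω ≤ s} = μ (Set.Iic s) := fun s =>
    (Measure.map_apply_of_aemeasurable hmeas measurableSet_Iic).symm
  have hfold : ∀ p : ℝ, sInf {s : ℝ | ENNReal.ofReal p ≤ P {ω | L ω ≤ s}} = Qf μ p := by
    intro p; rw [Qf]; congr 1; ext s
    simp only [Set.mem_setOf_eq, hset]
  simp only [hfold]
  -- transfer of lower integrals through the quantile transform
  have htrans : ∀ g : ℝ → ℝ≥0∞, Measurable g →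
      ∫⁻ ω, g (L ω) ∂P = ∫⁻ p in Set.Ioo (0:ℝ) 1, g (Qm μ p) := by
    intro g hg
    calc ∫⁻ ω, g (L ω) ∂P = ∫⁻ x, g x ∂μ := (lintegral_map' hg.aemeasurable hmeas).symm
      _ = ∫⁻ x, g x ∂((volume.restrict (Set.Ioo (0:ℝ) 1)).map (Qm μ)) := by rw [map_Qm μ]
      _ = ∫⁻ p in Set.Ioo (0:ℝ) 1, g (Qm μ p) := lintegral_map hg (measurable_Qm μ)
  have hae_iff : (∀ᵐ ω ∂P, 0 ≤ L ω) ↔ μ (Set.Iio 0) = 0 := by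
    rw [hμdef, Measure.map_apply_of_aemeasurable hmeas measurableSet_Iio, ae_iff]
    have : {ω | ¬ 0 ≤ L ω} = L ⁻¹' Set.Iio 0 := by
      ext ω; simp [not_le]
    rw [this]
  have hmu_of_Qnn : (∀ p ∈ Set.Ioo (0:ℝ) 1, 0 ≤ Qf μ p) → μ (Set.Iio 0) = 0 := by
    intro h
    rw [← map_Qm μ, Measure.map_apply (measurable_Qm μ) measurableSet_Iio,
      Measure.restrict_apply (measurable_Qm μ measurableSet_Iio)]
    have hempty : Qm μ ⁻¹' Set.Iio 0 ∩ Set.Ioo 0 1 = ∅ := by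
      ext p
      simp only [Set.mem_inter_iff, Set.mem_preimage, Set.mem_Iio, Set.mem_empty_iff_false,
        iff_false, not_and]
      intro hneg hp
      rw [Qm, if_pos hp] at hneg
      exact absurd hneg (not_lt.2 (h p hp))
    rw [hempty, measure_empty]
  have hT_eq : (∀ᵐ ω ∂P, 0 ≤ L ω) →
      ENNReal.ofReal (∫ ω, L ω ∂P) = ∫⁻ p in Set.Ioo (0:ℝ) 1, ENNReal.ofReal (Qm μ p) := by
    intro hae
    rw [MeasureTheory.ofReal_integral_eq_lintegral_ofReal hLi hae]
    exact htrans (fun x => ENNReal.ofReal x) ENNReal.measurable_ofReal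
  have hplus : ∀ c : ℝ, ∫ ω, max (L ω - c) 0 ∂P
      = (∫⁻ p in Set.Ioo (0:ℝ) 1, ENNReal.ofReal (Qm μ p - c)).toReal := by
    intro c
    have hmeasmax : AEStronglyMeasurable (fun ω => max (L ω - c) 0) P := by
      apply AEMeasurable.aestronglyMeasurable
      exact (hmeas.sub aemeasurable_const).max aemeasurable_const
    rw [show (∫ ω, max (L ω - c) 0 ∂P) = (∫⁻ ω, ENNReal.ofReal (max (L ω - c) 0) ∂P).toReal from
      integral_eq_lintegral_of_nonneg_ae (ae_of_all _ (fun ω => le_max_right (L ω - c) 0)) hmeasmax]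
    congr 1
    have hpt : ∀ ω, ENNReal.ofReal (max (L ω - c) 0) = ENNReal.ofReal (L ω - c) :=
      fun ω => ofReal_max_zero _
    simp only [hpt]
    exact htrans (fun x => ENNReal.ofReal (x - c)) ((measurable_id.sub_const c).ennreal_ofReal)
  have hrefl01 : ∀ g : ℝ → ℝ≥0∞, Measurable g →
      ∫⁻ s in Set.Ioo (0:ℝ) 1, g (1 - s) = ∫⁻ p in Set.Ioo (0:ℝ) 1, g p := by
    intro g hg
    have := refl_lint 0 1 g hg
    norm_num at this
    exact this
  have hQmQf : ∀ p ∈ Set.Ioo (0:ℝ) 1, Qm μ p = Qf μ p := by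
    intro p hp; rw [Qm, if_pos hp]
  constructor
  · -- forward direction
    rintro ⟨hprob, hrep⟩
    haveI := hprob
    have hIfin : ∀ t : ℝ, 0 < t → (∫⁻ a in Set.Ioc t 1, ENNReal.ofReal a⁻¹ ∂lam) ≠ ⊤ := by
      intro t ht
      have hb : (∫⁻ a in Set.Ioc t 1, ENNReal.ofReal a⁻¹ ∂lam)
          ≤ ENNReal.ofReal t⁻¹ * lam (Set.Ioc t 1) := by
        rw [← setLIntegral_const]
        refine setLIntegral_mono' measurableSet_Ioc (fun a ha => ENNReal.ofReal_le_ofReal ?_)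
        exact inv_anti₀ ht ha.1.le
      exact ne_top_of_le_ne_top (ENNReal.mul_ne_top ENNReal.ofReal_ne_top (measure_ne_top _ _)) hb
    have hrep_bridge : ∀ t ∈ Set.Ioo (0:ℝ) 1,
        ∫ a in Set.Ioc t 1, a⁻¹ ∂lam = (∫⁻ a in Set.Ioc t 1, ENNReal.ofReal a⁻¹ ∂lam).toReal := by
      intro t ht
      rw [integral_eq_lintegral_of_nonneg_ae]
      · refine (ae_restrict_iff' measurableSet_Ioc).2 (ae_of_all _ (fun a ha =>
          inv_nonneg.2 (le_of_lt (lt_trans ht.1 ha.1))))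
      · exact measurable_inv.aestronglyMeasurable
    have hQt : ∀ t ∈ Set.Ioo (0:ℝ) 1,
        ENNReal.ofReal (Qf μ (1 - t)) = ∫⁻ a in Set.Ioc t 1, ENNReal.ofReal a⁻¹ ∂lam ∧
        0 ≤ Qf μ (1 - t) := by
      intro t ht
      have h1 := hrep t ht
      rw [hrep_bridge t ht] at h1
      exact ⟨by rw [h1, ENNReal.ofReal_toReal (hIfin t ht.1)], by rw [h1]; exact ENNReal.toReal_nonneg⟩
    have hlam1 : lam (Set.Ioc (0:ℝ) 1) = 1 := by
      refine le_antisymm (le_trans (measure_mono (Set.subset_univ _)) measure_univ.le) ?_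
      have h1 : (1:ℝ≥0∞) = lam Set.univ := measure_univ.symm
      calc (1:ℝ≥0∞) = lam Set.univ := h1
        _ = lam (Set.Ioc (0:ℝ) 1 ∪ (Set.Ioc (0:ℝ) 1)ᶜ) := by rw [Set.union_compl_self]
        _ ≤ lam (Set.Ioc (0:ℝ) 1) + lam ((Set.Ioc (0:ℝ) 1)ᶜ) := measure_union_le _ _
        _ = lam (Set.Ioc (0:ℝ) 1) := by rw [hsupp, add_zero]
    have hQnn : ∀ p ∈ Set.Ioo (0:ℝ) 1, 0 ≤ Qf μ p := by
      intro p hp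
      have h := (hQt (1 - p) ⟨by linarith [hp.2], by linarith [hp.1]⟩).2
      rw [show (1:ℝ) - (1 - p) = p by ring] at h
      exact h
    have haeL : ∀ᵐ ω ∂P, 0 ≤ L ω := hae_iff.2 (hmu_of_Qnn hQnn)
    have hT : (∫⁻ p in Set.Ioo (0:ℝ) 1, ENNReal.ofReal (Qm μ p)) = 1 := by
      have hg : Measurable (fun p => ENNReal.ofReal (Qm μ p)) :=
        (measurable_Qm μ).ennreal_ofReal
      rw [← hrefl01 _ hg]
      calc ∫⁻ s in Set.Ioo (0:ℝ) 1, ENNReal.ofReal (Qm μ (1 - s))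
          = ∫⁻ t in Set.Ioo (0:ℝ) 1, (∫⁻ a in Set.Ioc t 1, ENNReal.ofReal a⁻¹ ∂lam) := by
            refine setLIntegral_congr_fun measurableSet_Ioo (fun t ht => ?_)
            rw [hQmQf (1 - t) ⟨by linarith [ht.2], by linarith [ht.1]⟩, (hQt t ht).1]
        _ = lam (Set.Ioc (0:ℝ) 1) := FWD_swap lam one_pos
        _ = 1 := hlam1
    refine ⟨haeL, ?_, ?_, hlam1⟩
    · have h := hT_eq haeL
      rw [hT] at h
      exact ENNReal.ofReal_eq_one.1 h
    · intro α hα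
      have hc0 : 0 ≤ Qf μ (1 - α) := hQnn _ ⟨by linarith [hα.2], by linarith [hα.1]⟩
      rw [hplus (Qf μ (1 - α))]
      congr 1
      have hIα := (hQt α hα).1
      have hJ : ∀ t ∈ Set.Ioo (0:ℝ) 1,
          ENNReal.ofReal (Qm μ (1 - t) - Qf μ (1 - α))
            = ∫⁻ a in Set.Ioc t α, ENNReal.ofReal a⁻¹ ∂lam := by
        intro t ht
        rw [hQmQf (1 - t) ⟨by linarith [ht.2], by linarith [ht.1]⟩]
        rcases le_or_gt t α with hle | hlt
        · have hsplit : Set.Ioc t α ∪ Set.Ioc α 1 = Set.Ioc t 1 :=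
            Set.Ioc_union_Ioc_eq_Ioc hle hα.2.le
          have hdisj : Disjoint (Set.Ioc t α) (Set.Ioc α 1) := by
            refine Set.disjoint_left.2 (fun x hx hx' => ?_)
            exact absurd hx'.1 (not_lt.2 hx.2)
          have hadd : (∫⁻ a in Set.Ioc t 1, ENNReal.ofReal a⁻¹ ∂lam)
              = (∫⁻ a in Set.Ioc t α, ENNReal.ofReal a⁻¹ ∂lam)
                + (∫⁻ a in Set.Ioc α 1, ENNReal.ofReal a⁻¹ ∂lam) := by
            rw [← hsplit, lintegral_union measurableSet_Ioc hdisj]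
          rw [ENNReal.ofReal_sub _ hc0, (hQt t ht).1, hIα, hadd,
            ENNReal.add_sub_cancel_right (hIfin α hα.1)]
        · have hmono : Qf μ (1 - t) ≤ Qf μ (1 - α) :=
            Qf_mono μ ⟨by linarith [ht.2], by linarith [ht.1]⟩
              ⟨by linarith [hα.2], by linarith [hα.1]⟩ (by linarith)
          have hempty : Set.Ioc t α = ∅ := Set.Ioc_eq_empty (not_lt.2 hlt.le)
          rw [hempty, Measure.restrict_empty, lintegral_zero_measure,
            ENNReal.ofReal_eq_zero.2 (by linarith)]
      calc lam (Set.Ioc (0:ℝ) α)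
          = ∫⁻ t in Set.Ioo 0 α, (∫⁻ a in Set.Ioc t α, ENNReal.ofReal a⁻¹ ∂lam) :=
            (FWD_swap lam hα.1).symm
        _ = ∫⁻ t in Set.Ioo (0:ℝ) 1, (∫⁻ a in Set.Ioc t α, ENNReal.ofReal a⁻¹ ∂lam) := by
            rw [← Set.Ioo_union_Ico_eq_Ioo hα.1 hα.2.le,
              lintegral_union measurableSet_Ico
                (Set.disjoint_left.2 (fun x hx hx' => absurd hx'.1 (not_le.2 hx.2)))]
            have hzero : ∫⁻ t in Set.Ico α 1, (∫⁻ a in Set.Ioc t α, ENNReal.ofReal a⁻¹ ∂lam)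
                = 0 := by
              rw [setLIntegral_congr_fun measurableSet_Ico (fun t ht => ?_),
                lintegral_zero]
              rw [Set.Ioc_eq_empty (not_lt.2 ht.1), Measure.restrict_empty,
                lintegral_zero_measure]
            rw [hzero, add_zero]
        _ = ∫⁻ t in Set.Ioo (0:ℝ) 1, ENNReal.ofReal (Qm μ (1 - t) - Qf μ (1 - α)) :=
            (setLIntegral_congr_fun measurableSet_Ioo (fun t ht => hJ t ht)).symm
        _ = ∫⁻ p in Set.Ioo (0:ℝ) 1, ENNReal.ofReal (Qm μ p - Qf μ (1 - α)) :=
            hrefl01 _ ((measurable_Qm μ).sub_const _).ennreal_ofReal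
  · -- backward direction
    rintro ⟨haeL, hEL1, hlamF, hlam1⟩
    have hlamuniv : lam Set.univ = 1 := by
      refine le_antisymm ?_ (hlam1 ▸ measure_mono (Set.subset_univ _))
      calc lam Set.univ = lam (Set.Ioc (0:ℝ) 1 ∪ (Set.Ioc (0:ℝ) 1)ᶜ) := by
            rw [Set.union_compl_self]
        _ ≤ lam (Set.Ioc (0:ℝ) 1) + lam ((Set.Ioc (0:ℝ) 1)ᶜ) := measure_union_le _ _
        _ = 1 := by rw [hsupp, add_zero, hlam1]
    haveI hprob : IsProbabilityMeasure lam := ⟨hlamuniv⟩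
    refine ⟨hprob, ?_⟩
    intro t ht
    have hQnn : ∀ p ∈ Set.Ioo (0:ℝ) 1, 0 ≤ Qf μ p := fun p hp => Qf_nonneg μ (hae_iff.1 haeL) hp
    have hT : (∫⁻ p in Set.Ioo (0:ℝ) 1, ENNReal.ofReal (Qm μ p)) = 1 := by
      have h := hT_eq haeL
      rw [hEL1, ENNReal.ofReal_one] at h
      exact h.symm
    set qE : ℝ → ℝ≥0∞ := fun p => ENNReal.ofReal (Qm μ p) with hqE
    have hqEm : Measurable qE := (measurable_Qm μ).ennreal_ofReal
    set A : ℝ → ℝ≥0∞ := fun u => ∫⁻ p in Set.Ioo 0 u, qE p with hAdef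
    have hAm : Measurable A :=
      Monotone.measurable (fun u u' huu' => lintegral_mono_set (Set.Ioo_subset_Ioo le_rfl huu'))
    set cE : ℝ → ℝ≥0∞ := fun β => ENNReal.ofReal (Qm μ (1 - β)) with hcEdef
    have hcEm : Measurable cE :=
      ((measurable_Qm μ).comp (measurable_const.sub measurable_id)).ennreal_ofReal
    set M : ℝ → ℝ≥0∞ := fun β => A (1 - β) + cE β * ENNReal.ofReal β with hMdef
    have hMm : Measurable M :=
      ((hAm.comp (measurable_const.sub measurable_id)).add
        (hcEm.mul measurable_id.ennreal_ofReal))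
    have hm2 : Measurable (fun s : ℝ => ENNReal.ofReal ((s ^ 2)⁻¹)) := by fun_prop
    -- lam CDF equals K
    have hK : ∀ α ∈ Set.Ioo (0:ℝ) 1, lam (Set.Ioc 0 α)
        = ∫⁻ p in Set.Ioo (0:ℝ) 1, ENNReal.ofReal (Qm μ p - Qf μ (1 - α)) := by
      intro α hα
      have hc0 : 0 ≤ Qf μ (1 - α) := hQnn _ ⟨by linarith [hα.2], by linarith [hα.1]⟩
      have h := hlamF α hα
      rw [hplus (Qf μ (1 - α))] at h
      have hKle : (∫⁻ p in Set.Ioo (0:ℝ) 1, ENNReal.ofReal (Qm μ p - Qf μ (1 - α))) ≤ 1 := by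
        rw [← hT]
        exact lintegral_mono (fun p => ENNReal.ofReal_le_ofReal (by linarith [sub_le_self (Qm μ p) hc0]))
      exact (ENNReal.toReal_eq_toReal_iff' (measure_ne_top lam _)
        (ne_top_of_le_ne_top ENNReal.one_ne_top hKle)).1 h
    -- K + M = 1
    have hMa : ∀ α ∈ Set.Ioo (0:ℝ) 1, lam (Set.Ioc 0 α) + M α = 1 := by
      intro α hα
      have h1α : (1 - α) ∈ Set.Ioo (0:ℝ) 1 := ⟨by linarith [hα.2], by linarith [hα.1]⟩
      have hc0 : 0 ≤ Qf μ (1 - α) := hQnn _ h1α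
      have hcc : ENNReal.ofReal (Qf μ (1 - α)) = cE α := by
        rw [hcEdef]; simp only [hQmQf _ h1α]
      have hmin_add : (∫⁻ p in Set.Ioo (0:ℝ) 1, ENNReal.ofReal (Qm μ p - Qf μ (1 - α)))
          + (∫⁻ p in Set.Ioo (0:ℝ) 1, min (qE p) (ENNReal.ofReal (Qf μ (1 - α)))) = 1 := by
        rw [← lintegral_add_left (((measurable_Qm μ).sub_const _).ennreal_ofReal), ← hT]
        refine setLIntegral_congr_fun measurableSet_Ioo (fun p hp => ?_)
        rcases le_total (Qm μ p) (Qf μ (1 - α)) with hxc | hcx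
        · rw [ENNReal.ofReal_eq_zero.2 (by linarith), zero_add,
            min_eq_left (ENNReal.ofReal_le_ofReal hxc)]
        · rw [ENNReal.ofReal_sub _ hc0, min_eq_right (ENNReal.ofReal_le_ofReal hcx),
            tsub_add_cancel_of_le (ENNReal.ofReal_le_ofReal hcx)]
      have hmin_eq : (∫⁻ p in Set.Ioo (0:ℝ) 1, min (qE p) (ENNReal.ofReal (Qf μ (1 - α))))
          = M α := by
        rw [← Set.Ioo_union_Ico_eq_Ioo h1α.1 h1α.2.le,
          lintegral_union measurableSet_Ico
            (Set.disjoint_left.2 (fun x hx hx' => absurd hx'.1 (not_le.2 hx.2)))]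
        have hfirst : (∫⁻ p in Set.Ioo (0:ℝ) (1 - α), min (qE p) (ENNReal.ofReal (Qf μ (1 - α))))
            = A (1 - α) := by
          refine setLIntegral_congr_fun measurableSet_Ioo (fun p hp => ?_)
          have hpIoo : p ∈ Set.Ioo (0:ℝ) 1 := ⟨hp.1, by linarith [hp.2, h1α.2]⟩
          refine min_eq_left (ENNReal.ofReal_le_ofReal ?_)
          rw [hQmQf _ hpIoo]
          exact Qf_mono μ hpIoo h1α hp.2.le
        have hsecond : (∫⁻ p in Set.Ico (1 - α) 1, min (qE p) (ENNReal.ofReal (Qf μ (1 - α))))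
            = cE α * ENNReal.ofReal α := by
          have hpt : ∀ p ∈ Set.Ico (1 - α) 1, min (qE p) (ENNReal.ofReal (Qf μ (1 - α)))
              = ENNReal.ofReal (Qf μ (1 - α)) := by
            intro p hp
            have hpIoo : p ∈ Set.Ioo (0:ℝ) 1 := ⟨by linarith [hp.1, h1α.1], hp.2⟩
            refine min_eq_right (ENNReal.ofReal_le_ofReal ?_)
            rw [hQmQf _ hpIoo]
            exact Qf_mono μ h1α hpIoo hp.1
          rw [setLIntegral_congr_fun measurableSet_Ico hpt, setLIntegral_const,
            Real.volume_Ico, hcc, show (1:ℝ) - (1 - α) = α by ring]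
        rw [hfirst, hsecond, hMdef]
      rw [hK α hα, ← hmin_eq, hmin_add]
    have hMle1 : ∀ α ∈ Set.Ioo (0:ℝ) 1, M α ≤ 1 := fun α hα => le_trans le_add_self (hMa α hα).le
    -- interval identities
    have h3 : lam (Set.Ioc t 1) = M t := by
      have hsplit : lam (Set.Ioc (0:ℝ) t) + lam (Set.Ioc t 1) = 1 := by
        rw [← measure_union (Set.disjoint_left.2 (fun x hx hx' => absurd hx'.1 (not_lt.2 hx.2)))
          measurableSet_Ioc, Set.Ioc_union_Ioc_eq_Ioc ht.1.le ht.2.le, hlam1]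
      exact (ENNReal.add_right_inj (measure_ne_top lam (Set.Ioc (0:ℝ) t))).1
        (show lam (Set.Ioc (0:ℝ) t) + lam (Set.Ioc t 1) = lam (Set.Ioc (0:ℝ) t) + M t from by
          rw [hsplit, hMa t ht])
    have h4 : ∀ s ∈ Set.Ioo t 1, lam (Set.Ioc t s) + M s = M t := by
      intro s hs
      have hsplit2 : lam (Set.Ioc (0:ℝ) t) + lam (Set.Ioc t s) = lam (Set.Ioc (0:ℝ) s) := by
        rw [← measure_union (Set.disjoint_left.2 (fun x hx hx' => absurd hx'.1 (not_lt.2 hx.2)))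
          measurableSet_Ioc, Set.Ioc_union_Ioc_eq_Ioc ht.1.le hs.1.le]
      refine (ENNReal.add_right_inj (measure_ne_top lam (Set.Ioc (0:ℝ) t))).1 ?_
      calc lam (Set.Ioc (0:ℝ) t) + (lam (Set.Ioc t s) + M s)
          = lam (Set.Ioc (0:ℝ) s) + M s := by rw [← hsplit2, add_assoc]
        _ = 1 := hMa s ⟨lt_trans ht.1 hs.1, hs.2⟩
        _ = lam (Set.Ioc (0:ℝ) t) + M t := (hMa t ht).symm
    -- finiteness of lam's lower integral
    have hIfin : (∫⁻ a in Set.Ioc t 1, ENNReal.ofReal a⁻¹ ∂lam) ≠ ⊤ := by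
      have hb : (∫⁻ a in Set.Ioc t 1, ENNReal.ofReal a⁻¹ ∂lam)
          ≤ ENNReal.ofReal t⁻¹ * lam (Set.Ioc t 1) := by
        rw [← setLIntegral_const]
        refine setLIntegral_mono' measurableSet_Ioc (fun a ha => ENNReal.ofReal_le_ofReal ?_)
        exact inv_anti₀ ht.1 ha.1.le
      exact ne_top_of_le_ne_top (ENNReal.mul_ne_top ENNReal.ofReal_ne_top (measure_ne_top _ _)) hb
    have hrep_bridge : ∫ a in Set.Ioc t 1, a⁻¹ ∂lam
        = (∫⁻ a in Set.Ioc t 1, ENNReal.ofReal a⁻¹ ∂lam).toReal := by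
      rw [integral_eq_lintegral_of_nonneg_ae]
      · refine (ae_restrict_iff' measurableSet_Ioc).2 (ae_of_all _ (fun a ha =>
          inv_nonneg.2 (le_of_lt (lt_trans ht.1 ha.1))))
      · exact measurable_inv.aestronglyMeasurable
    have h1tIoo : (1 - t) ∈ Set.Ioo (0:ℝ) 1 := ⟨by linarith [ht.2], by linarith [ht.1]⟩
    rw [hrep_bridge]
    suffices hIt : (∫⁻ a in Set.Ioc t 1, ENNReal.ofReal a⁻¹ ∂lam)
        = ENNReal.ofReal (Qf μ (1 - t)) by
      rw [hIt, ENNReal.toReal_ofReal (hQnn _ h1tIoo)]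
    have hcEt : ENNReal.ofReal (Qf μ (1 - t)) = cE t := by
      rw [hcEdef]; simp only [hQmQf _ h1tIoo]
    -- decompose the lam-integral
    have hstep5 : (∫⁻ a in Set.Ioc t 1, ENNReal.ofReal a⁻¹ ∂lam)
        = M t + ∫⁻ a in Set.Ioc t 1, (∫⁻ s in Set.Ioo a 1, ENNReal.ofReal ((s ^ 2)⁻¹)) ∂lam := by
      rw [← h3]
      calc ∫⁻ a in Set.Ioc t 1, ENNReal.ofReal a⁻¹ ∂lam
          = ∫⁻ a in Set.Ioc t 1,
              (1 + ∫⁻ s in Set.Ioo a 1, ENNReal.ofReal ((s ^ 2)⁻¹)) ∂lam := by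
            refine setLIntegral_congr_fun measurableSet_Ioc (fun a ha => ?_)
            have ha0 : 0 < a := lt_trans ht.1 ha.1
            rw [lint_invsq ha0 ha.2, inv_one]
            have h1a : 1 ≤ a⁻¹ := by
              rw [le_inv_comm₀ one_pos ha0]
              simpa using ha.2
            rw [show a⁻¹ = 1 + (a⁻¹ - 1) by ring, ENNReal.ofReal_add zero_le_one (by linarith),
              ENNReal.ofReal_one, show (1:ℝ) + (a⁻¹ - 1) = a⁻¹ by ring]
        _ = lam (Set.Ioc t 1)
            + ∫⁻ a in Set.Ioc t 1, (∫⁻ s in Set.Ioo a 1, ENNReal.ofReal ((s ^ 2)⁻¹)) ∂lam := by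
            rw [lintegral_add_left measurable_const, setLIntegral_one]
    -- swap and replace Ioo by Ioc a.e.
    have hW : (∫⁻ a in Set.Ioc t 1, (∫⁻ s in Set.Ioo a 1, ENNReal.ofReal ((s ^ 2)⁻¹)) ∂lam)
        = ∫⁻ s in Set.Ioo t 1, ENNReal.ofReal ((s ^ 2)⁻¹) * lam (Set.Ioc t s) := by
      rw [BWD_swap2 lam ht.1, ← lintegral_indicator measurableSet_Ioo]
      refine lintegral_congr_ae ?_
      have hcnt : Set.Countable {x : ℝ | 0 < lam {x}} := by
        have := Measure.countable_meas_level_set_pos (μ := lam) (g := fun x : ℝ => x)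
          measurable_id
        simpa using this
      have hnull : volume {x : ℝ | 0 < lam {x}} = 0 := hcnt.measure_zero _
      have hae : ∀ᵐ s : ℝ, s ∉ {x : ℝ | 0 < lam {x}} := by
        rw [ae_iff]
        convert hnull using 2
        ext x
        simp [pos_iff_ne_zero]
      filter_upwards [hae] with s hsD
      by_cases hs : s ∈ Set.Ioo t 1
      · rw [Set.indicator_of_mem hs, Set.indicator_of_mem hs]
        congr 1
        have hs0 : lam {s} = 0 := by
          by_contra hne
          exact hsD (zero_lt_iff.2 hne)
        refine le_antisymm (measure_mono Set.Ioo_subset_Ioc_self) ?_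
        calc lam (Set.Ioc t s) ≤ lam (Set.Ioo t s ∪ {s}) := by
              refine measure_mono (fun x hx => ?_)
              rcases eq_or_lt_of_le hx.2 with hxe | hxl
              · exact Or.inr (by simp [hxe])
              · exact Or.inl ⟨hx.1, hxl⟩
          _ ≤ lam (Set.Ioo t s) + lam {s} := measure_union_le _ _
          _ = lam (Set.Ioo t s) := by rw [hs0, add_zero]
      · rw [Set.indicator_of_notMem hs, Set.indicator_of_notMem hs]
    -- the auxiliary integral X
    set X := ∫⁻ s in Set.Ioo t 1, ENNReal.ofReal ((s ^ 2)⁻¹) * M s with hXdef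
    have hXle : X ≤ ENNReal.ofReal (t⁻¹ - 1) := by
      calc X ≤ ∫⁻ s in Set.Ioo t 1, ENNReal.ofReal ((s ^ 2)⁻¹) * 1 := by
            refine setLIntegral_mono' measurableSet_Ioo (fun s hs => ?_)
            exact mul_le_mul_right (hMle1 s ⟨lt_trans ht.1 hs.1, hs.2⟩) _
        _ = ∫⁻ s in Set.Ioo t 1, ENNReal.ofReal ((s ^ 2)⁻¹) := by simp
        _ = ENNReal.ofReal (t⁻¹ - 1) := by rw [lint_invsq ht.1 ht.2.le, inv_one]
    have hXfin : X ≠ ⊤ := ne_top_of_le_ne_top ENNReal.ofReal_ne_top hXle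
    -- W' + X
    have hWX : (∫⁻ s in Set.Ioo t 1, ENNReal.ofReal ((s ^ 2)⁻¹) * lam (Set.Ioc t s)) + X
        = ENNReal.ofReal (t⁻¹ - 1) * M t := by
      have hlm : Measurable (fun s : ℝ => ENNReal.ofReal ((s ^ 2)⁻¹) * lam (Set.Ioc t s)) := by
        refine hm2.mul (Monotone.measurable (fun u u' huu' => ?_))
        exact measure_mono (Set.Ioc_subset_Ioc le_rfl huu')
      rw [hXdef, ← lintegral_add_left hlm]
      calc ∫⁻ s in Set.Ioo t 1,
            (ENNReal.ofReal ((s ^ 2)⁻¹) * lam (Set.Ioc t s) + ENNReal.ofReal ((s ^ 2)⁻¹) * M s)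
          = ∫⁻ s in Set.Ioo t 1, ENNReal.ofReal ((s ^ 2)⁻¹) * M t := by
            refine setLIntegral_congr_fun measurableSet_Ioo (fun s hs => ?_)
            rw [← mul_add, h4 s hs]
        _ = (∫⁻ s in Set.Ioo t 1, ENNReal.ofReal ((s ^ 2)⁻¹)) * M t :=
            lintegral_mul_const (M t) hm2
        _ = ENNReal.ofReal (t⁻¹ - 1) * M t := by rw [lint_invsq ht.1 ht.2.le, inv_one]
    -- value of X
    have hXval : X = ENNReal.ofReal t⁻¹ * A (1 - t) := by
      have hterm1 : (∫⁻ s in Set.Ioo t 1, ENNReal.ofReal ((s ^ 2)⁻¹) * A (1 - s))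
          = ∫⁻ p in Set.Ioo 0 (1 - t), qE p * ENNReal.ofReal (t⁻¹ - (1 - p)⁻¹) :=
        BWD_swap ht.1 ht.2 qE hqEm
      set g : ℝ → ℝ≥0∞ := fun p => ENNReal.ofReal ((1 - p)⁻¹) * qE p with hgdef
      have hgm : Measurable g :=
        ((measurable_const.sub measurable_id).inv.ennreal_ofReal).mul hqEm
      have hterm2 : (∫⁻ s in Set.Ioo t 1, ENNReal.ofReal ((s ^ 2)⁻¹) * (cE s * ENNReal.ofReal s))
          = ∫⁻ p in Set.Ioo 0 (1 - t), g p := by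
        have hpt : ∀ s ∈ Set.Ioo t 1,
            ENNReal.ofReal ((s ^ 2)⁻¹) * (cE s * ENNReal.ofReal s) = g (1 - s) := by
          intro s hs
          have hs0 : (0:ℝ) < s := lt_trans ht.1 hs.1
          rw [hgdef]
          simp only [show (1:ℝ) - (1 - s) = s by ring]
          rw [hcEdef]
          calc ENNReal.ofReal ((s ^ 2)⁻¹) * (ENNReal.ofReal (Qm μ (1 - s)) * ENNReal.ofReal s)
              = (ENNReal.ofReal ((s ^ 2)⁻¹) * ENNReal.ofReal s)
                  * ENNReal.ofReal (Qm μ (1 - s)) := by ring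
            _ = ENNReal.ofReal s⁻¹ * ENNReal.ofReal (Qm μ (1 - s)) := by
                rw [← ENNReal.ofReal_mul (by positivity)]
                congr 1
                field_simp
        rw [setLIntegral_congr_fun measurableSet_Ioo hpt]
        have := refl_lint t 1 g hgm
        norm_num at this
        exact this
      calc X = ∫⁻ s in Set.Ioo t 1,
            (ENNReal.ofReal ((s ^ 2)⁻¹) * A (1 - s)
              + ENNReal.ofReal ((s ^ 2)⁻¹) * (cE s * ENNReal.ofReal s)) := by
            rw [hXdef]
            refine setLIntegral_congr_fun measurableSet_Ioo (fun s hs => ?_)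
            rw [hMdef, mul_add]
        _ = (∫⁻ s in Set.Ioo t 1, ENNReal.ofReal ((s ^ 2)⁻¹) * A (1 - s))
            + ∫⁻ s in Set.Ioo t 1, ENNReal.ofReal ((s ^ 2)⁻¹) * (cE s * ENNReal.ofReal s) := by
            rw [lintegral_add_left (f := fun s : ℝ => ENNReal.ofReal ((s ^ 2)⁻¹) * A (1 - s))
              (hm2.mul (hAm.comp (measurable_const.sub measurable_id)))]
        _ = (∫⁻ p in Set.Ioo 0 (1 - t), qE p * ENNReal.ofReal (t⁻¹ - (1 - p)⁻¹))
            + ∫⁻ p in Set.Ioo 0 (1 - t), ENNReal.ofReal ((1 - p)⁻¹) * qE p := by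
            rw [hterm1, hterm2]
        _ = ∫⁻ p in Set.Ioo 0 (1 - t), qE p * ENNReal.ofReal t⁻¹ := by
            rw [← lintegral_add_left
              (f := fun p : ℝ => qE p * ENNReal.ofReal (t⁻¹ - (1 - p)⁻¹))
              (hqEm.mul ((measurable_const.sub
                ((measurable_const.sub measurable_id).inv)).ennreal_ofReal))]
            refine setLIntegral_congr_fun measurableSet_Ioo (fun p hp => ?_)
            have h1p : (0:ℝ) < 1 - p := by linarith [hp.2, ht.1]
            have hp1 : (1 - p)⁻¹ ≤ t⁻¹ := inv_anti₀ ht.1 (by linarith [hp.2])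
            calc qE p * ENNReal.ofReal (t⁻¹ - (1 - p)⁻¹) + ENNReal.ofReal ((1 - p)⁻¹) * qE p
                = qE p * (ENNReal.ofReal (t⁻¹ - (1 - p)⁻¹) + ENNReal.ofReal ((1 - p)⁻¹)) := by
                  ring
              _ = qE p * ENNReal.ofReal t⁻¹ := by
                  rw [← ENNReal.ofReal_add (by linarith) (inv_nonneg.2 h1p.le)]
                  congr 1
                  ring
        _ = ENNReal.ofReal t⁻¹ * A (1 - t) := by
            rw [lintegral_mul_const _ hqEm, hAdef, mul_comm]
    -- final assembly
    have hofr : ENNReal.ofReal t⁻¹ = 1 + ENNReal.ofReal (t⁻¹ - 1) := by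
      have h1t : (1:ℝ) ≤ t⁻¹ := by
        rw [le_inv_comm₀ one_pos ht.1]
        simpa using ht.2.le
      rw [show t⁻¹ = 1 + (t⁻¹ - 1) by ring, ENNReal.ofReal_add zero_le_one (by linarith),
        ENNReal.ofReal_one, show (1:ℝ) + (t⁻¹ - 1) = t⁻¹ by ring]
    have hfinal : (∫⁻ a in Set.Ioc t 1, ENNReal.ofReal a⁻¹ ∂lam) + X = cE t + X := by
      calc (∫⁻ a in Set.Ioc t 1, ENNReal.ofReal a⁻¹ ∂lam) + X
          = M t + ((∫⁻ s in Set.Ioo t 1, ENNReal.ofReal ((s ^ 2)⁻¹) * lam (Set.Ioc t s)) + X) := by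
            rw [hstep5, hW, add_assoc]
        _ = M t + ENNReal.ofReal (t⁻¹ - 1) * M t := by rw [hWX]
        _ = ENNReal.ofReal t⁻¹ * M t := by
            rw [hofr, add_mul, one_mul]
        _ = ENNReal.ofReal t⁻¹ * A (1 - t) + ENNReal.ofReal t⁻¹ * (cE t * ENNReal.ofReal t) := by
            rw [hMdef, mul_add]
        _ = cE t + X := by
            rw [hXval]
            rw [show ENNReal.ofReal t⁻¹ * (cE t * ENNReal.ofReal t)
                = (ENNReal.ofReal t⁻¹ * ENNReal.ofReal t) * cE t by ring]
            rw [← ENNReal.ofReal_mul (inv_nonneg.2 ht.1.le), inv_mul_cancel₀ ht.1.ne',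
              ENNReal.ofReal_one, one_mul, add_comm]
    rw [hcEt]
    exact (ENNReal.add_left_inj hXfin).1 hfinal
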